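/- Let A ∈ ℝ^{m×l} have columns a₁,...,a_l, each with Euclidean norm √2, and let b ∈ ℝ^m. Define f(S) = ‖b‖² − (projection of b onto span{a_i : i ∈ S})‖² = min_x ‖A(S)x − b‖². Then for disjoint L, S ⊆ {1,...,l}, ∑_{z∈S} (f(L) − f(L∪{z})) ≥ λ_min(AᵀA/2, |L| + |S|) · (f(L) − f(L ∪ S)), where λ_min(C, k) = min_{|T|=k} λ_min(C(T)) is the smallest k-sparse eigenvalue of C = AᵀA/2. -/

import Mathlib

noncomputable section
open RealInnerProductSpace
namespace Stmt16
variable {m l : ℕ}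

def toE (b : Fin m → ℝ) : EuclideanSpace ℝ (Fin m) := WithLp.toLp 2 b

def col (A : Matrix (Fin m) (Fin l) ℝ) (j : Fin l) : EuclideanSpace ℝ (Fin m) := WithLp.toLp 2 (fun i => A i j)

def Vsp (A : Matrix (Fin m) (Fin l) ℝ) (S : Finset (Fin l)) :
    Submodule ℝ (EuclideanSpace ℝ (Fin m)) := Submodule.span ℝ (col A '' ↑S)

lemma norm_sq_eq (y : EuclideanSpace ℝ (Fin m)) : ‖y‖ ^ 2 = ∑ i, y i ^ 2 := by
  rw [← real_inner_self_eq_norm_sq, PiLp.inner_apply]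
  simp [sq, RCLike.inner_apply]

lemma sum_apply (s : Finset (Fin l)) (w : Fin l → EuclideanSpace ℝ (Fin m)) (i : Fin m) :
    (∑ j ∈ s, w j) i = ∑ j ∈ s, w j i :=
  map_sum (EuclideanSpace.proj i : EuclideanSpace ℝ (Fin m) →L[ℝ] ℝ) w s

lemma sum_smul_col (A : Matrix (Fin m) (Fin l) ℝ) (x : Fin l → ℝ) :
    toE (A.mulVec x) = ∑ j, x j • col A j := by
  ext i
  rw [sum_apply]
  show A.mulVec x i = _
  simp [Matrix.mulVec, dotProduct, col, mul_comm]

lemma vsp_mono (A : Matrix (Fin m) (Fin l) ℝ) {S T : Finset (Fin l)} (h : S ⊆ T) :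
    Vsp A S ≤ Vsp A T :=
  Submodule.span_mono (Set.image_mono (by exact_mod_cast h))

lemma col_mem (A : Matrix (Fin m) (Fin l) ℝ) {S : Finset (Fin l)} {j : Fin l} (h : j ∈ S) :
    col A j ∈ Vsp A S :=
  Submodule.subset_span ⟨j, by simpa using h, rfl⟩

lemma set_eq (A : Matrix (Fin m) (Fin l) ℝ) (b : Fin m → ℝ) (S : Finset (Fin l)) :
    {t : ℝ | ∃ x : Fin l → ℝ, (∀ i ∉ S, x i = 0) ∧ t = ∑ j, (A.mulVec x j - b j) ^ 2}
      = (fun w : EuclideanSpace ℝ (Fin m) => ‖w - toE b‖ ^ 2) '' (Vsp A S) := by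
  have hnorm : ∀ x : Fin l → ℝ,
      (∑ j, (A.mulVec x j - b j) ^ 2) = ‖toE (A.mulVec x) - toE b‖ ^ 2 := by
    intro x; rw [norm_sq_eq]; rfl
  ext t
  constructor
  · rintro ⟨x, hx, rfl⟩
    refine ⟨toE (A.mulVec x), ?_, (hnorm x).symm⟩
    rw [sum_smul_col]
    rw [show (∑ j, x j • col A j) = ∑ j ∈ S, x j • col A j by
      refine (Finset.sum_subset (Finset.subset_univ S) ?_).symm
      intro j _ hj; rw [hx j hj, zero_smul]]
    exact Submodule.sum_smul_mem _ _ (fun j hj => col_mem A hj)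
  · rintro ⟨w, hw, rfl⟩
    obtain ⟨c, hc, hcw⟩ := (Finsupp.mem_span_image_iff_linearCombination ℝ).mp hw
    refine ⟨fun j => c j, fun i hi => ?_, ?_⟩
    · by_contra h
      exact hi (by exact_mod_cast hc (Finsupp.mem_support_iff.mpr h))
    · rw [hnorm]
      congr 1
      have hw2 : w = ∑ j ∈ c.support, c j • col A j := by
        rw [← hcw, Finsupp.linearCombination_apply]; rfl
      rw [sum_smul_col, hw2]
      refine Finset.sum_subset (Finset.subset_univ _) ?_
      intro j _ hj
      rw [Finsupp.notMem_support_iff.mp hj, zero_smul]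

lemma sInf_eq (A : Matrix (Fin m) (Fin l) ℝ) (b : Fin m → ℝ) (S : Finset (Fin l)) :
    sInf ((fun w : EuclideanSpace ℝ (Fin m) => ‖w - toE b‖ ^ 2) '' (Vsp A S))
      = ‖toE b - (Submodule.orthogonalProjectionOnto (Vsp A S) (toE b) : EuclideanSpace ℝ (Fin m))‖ ^ 2 := by
  have hbdd : BddBelow ((fun w : EuclideanSpace ℝ (Fin m) => ‖w - toE b‖ ^ 2) '' (Vsp A S)) := by
    refine ⟨0, ?_⟩; rintro t ⟨w, _, rfl⟩; positivity
  apply le_antisymm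
  · refine csInf_le hbdd ⟨_, (Submodule.orthogonalProjectionOnto (Vsp A S) (toE b)).2, ?_⟩
    rw [norm_sub_rev]
  · refine le_csInf ⟨_, ⟨0, (Vsp A S).zero_mem, rfl⟩⟩ ?_
    rintro t ⟨w, hw, rfl⟩
    have key : toE b - w = (toE b - Submodule.orthogonalProjectionOnto (Vsp A S) (toE b)) +
        ((Submodule.orthogonalProjectionOnto (Vsp A S) (toE b) : EuclideanSpace ℝ (Fin m)) - w) := by abel
    have horth : (inner ℝ (toE b - (Submodule.orthogonalProjectionOnto (Vsp A S) (toE b) : EuclideanSpace ℝ (Fin m)))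
        ((Submodule.orthogonalProjectionOnto (Vsp A S) (toE b) : EuclideanSpace ℝ (Fin m)) - w) : ℝ) = 0 :=
      Submodule.starProjection_inner_eq_zero _ _ (Submodule.sub_mem _ (Submodule.orthogonalProjectionOnto (Vsp A S) (toE b)).2 hw)
    have := norm_add_sq_real (toE b - (Submodule.orthogonalProjectionOnto (Vsp A S) (toE b) : EuclideanSpace ℝ (Fin m)))
        ((Submodule.orthogonalProjectionOnto (Vsp A S) (toE b) : EuclideanSpace ℝ (Fin m)) - w)
    rw [horth] at this
    show _ ≤ ‖w - toE b‖ ^ 2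
    rw [norm_sub_rev w (toE b), key, this]
    nlinarith [sq_nonneg ‖(Submodule.orthogonalProjectionOnto (Vsp A S) (toE b) : EuclideanSpace ℝ (Fin m)) - w‖]

lemma col_inner (A : Matrix (Fin m) (Fin l) ℝ) (j₁ j₂ : Fin l) :
    (inner ℝ (col A j₁) (col A j₂) : ℝ) = (A.transpose * A) j₁ j₂ := by
  rw [PiLp.inner_apply]
  simp [Matrix.mul_apply, Matrix.transpose_apply, RCLike.inner_apply, col, mul_comm]

end Stmt16
end


set_option maxHeartbeats 1000000 in
open Stmt16 in
/-- Das–Kempe spectral lower bound: for a matrix `A` whose columns all have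
norm `√2`, the least-squares residual function
`f S = min { ‖A x - b‖² : x supported on S }` satisfies, for disjoint `L, S`,
`∑_{z∈S} (f L - f (L ∪ {z})) ≥ lam · (f L - f (L ∪ S))` whenever `lam` is a
lower bound on the Rayleigh quotients of all `(|L|+|S|)`-sparse principal
submatrices of `C = AᵀA / 2` (in particular for the smallest
`(|L|+|S|)`-sparse eigenvalue `λ_min(C, |L|+|S|)` of `C`). -/
theorem stmt_16 {m l : ℕ} (A : Matrix (Fin m) (Fin l) ℝ) (b : Fin m → ℝ)
    (hcol : ∀ j : Fin l, ∑ i, (A i j) ^ 2 = 2)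
    (f : Finset (Fin l) → ℝ)
    (hf : ∀ S : Finset (Fin l),
      f S = sInf {t : ℝ | ∃ x : Fin l → ℝ, (∀ i ∉ S, x i = 0) ∧
        t = ∑ j, (A.mulVec x j - b j) ^ 2})
    (L S : Finset (Fin l)) (hLS : Disjoint L S)
    (lam : ℝ)
    (hlam : ∀ T : Finset (Fin l), T.card = L.card + S.card →
      ∀ x : T → ℝ,
        lam * ∑ j, (x j) ^ 2 ≤
          ∑ j₁ : T, ∑ j₂ : T, x j₁ * (((A.transpose * A) (j₁ : Fin l) (j₂ : Fin l)) / 2) * x j₂) :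
    lam * (f L - f (L ∪ S)) ≤ ∑ z ∈ S, (f L - f (insert z L)) := by
  classical
  have hfval : ∀ T : Finset (Fin l),
      f T = ‖toE b - (Submodule.orthogonalProjectionOnto (Vsp A T) (toE b) : EuclideanSpace ℝ (Fin m))‖ ^ 2 := by
    intro T; rw [hf, set_eq, sInf_eq]
  have hfle : ∀ (T : Finset (Fin l)) (w : EuclideanSpace ℝ (Fin m)), w ∈ Vsp A T →
      f T ≤ ‖w - toE b‖ ^ 2 := by
    intro T w hw
    rw [hf, set_eq]
    refine csInf_le ⟨0, ?_⟩ ⟨w, hw, rfl⟩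
    rintro t ⟨u, _, rfl⟩; positivity
  set PL : EuclideanSpace ℝ (Fin m) := ↑(Submodule.orthogonalProjectionOnto (Vsp A L) (toE b)) with hPL
  set PLS : EuclideanSpace ℝ (Fin m) := ↑(Submodule.orthogonalProjectionOnto (Vsp A (L ∪ S)) (toE b)) with hPLS
  have hPLmem : PL ∈ Vsp A L := (Submodule.orthogonalProjectionOnto (Vsp A L) (toE b)).2
  have hPLSmem : PLS ∈ Vsp A (L ∪ S) := (Submodule.orthogonalProjectionOnto (Vsp A (L ∪ S)) (toE b)).2
  set res : EuclideanSpace ℝ (Fin m) := toE b - PL with hres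
  set c : Fin l → ℝ := fun j => (inner ℝ res (col A j) : ℝ) with hc
  have hcolnorm : ∀ j : Fin l, ‖col A j‖ ^ 2 = 2 := by
    intro j; rw [norm_sq_eq]; exact hcol j
  -- Step A
  have stepA : ∀ z ∈ S, c z ^ 2 / 2 ≤ f L - f (insert z L) := by
    intro z _
    have hmem : PL + (c z / 2) • col A z ∈ Vsp A (insert z L) := by
      refine Submodule.add_mem _ (vsp_mono A (Finset.subset_insert z L) hPLmem) ?_
      exact Submodule.smul_mem _ _ (col_mem A (Finset.mem_insert_self z L))
    have h1 : f (insert z L) ≤ ‖(PL + (c z / 2) • col A z) - toE b‖ ^ 2 := hfle _ _ hmem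
    have h2 : (PL + (c z / 2) • col A z) - toE b = -(res - (c z / 2) • col A z) := by
      rw [hres]; abel
    have h3 : ‖res - (c z / 2) • col A z‖ ^ 2
        = ‖res‖ ^ 2 - 2 * ((c z / 2) * c z) + (c z / 2) ^ 2 * 2 := by
      have hcz : (inner ℝ res (col A z) : ℝ) = c z := rfl
      rw [norm_sub_sq_real, real_inner_smul_right, hcz]
      have : ‖(c z / 2) • col A z‖ ^ 2 = (c z / 2) ^ 2 * 2 := by
        rw [norm_smul, mul_pow, hcolnorm, Real.norm_eq_abs, sq_abs]
      rw [this]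
    rw [h2, norm_neg, h3] at h1
    have h4 : f L = ‖res‖ ^ 2 := hfval L
    nlinarith [h1]
  -- Step C : Pythagoras
  set w0 : EuclideanSpace ℝ (Fin m) := PLS - PL with hw0
  have hw0mem : w0 ∈ Vsp A (L ∪ S) :=
    Submodule.sub_mem _ hPLSmem (vsp_mono A Finset.subset_union_left hPLmem)
  have horth0 : (inner ℝ (toE b - PLS) w0 : ℝ) = 0 :=
    Submodule.starProjection_inner_eq_zero _ _ hw0mem
  have hsplit : res = (toE b - PLS) + w0 := by rw [hres, hw0]; abel
  have hE : f L - f (L ∪ S) = ‖w0‖ ^ 2 := by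
    rw [hfval L, hfval (L ∪ S), ← hPL, ← hPLS, ← hres]
    rw [hsplit, norm_add_sq_real, horth0]
    ring
  have hinner0 : (inner ℝ res w0 : ℝ) = ‖w0‖ ^ 2 := by
    rw [hsplit, inner_add_left, horth0, real_inner_self_eq_norm_sq, zero_add]
  -- Step D : representation of w0
  obtain ⟨cf, hcf, hcfw⟩ := (Finsupp.mem_span_image_iff_linearCombination ℝ).mp hw0mem
  set x : Fin l → ℝ := fun j => cf j with hx
  have hx0 : ∀ j ∉ L ∪ S, x j = 0 := by
    intro j hj
    by_contra h
    exact hj (by exact_mod_cast hcf (Finsupp.mem_support_iff.mpr h))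
  have hw0x : w0 = ∑ j, x j • col A j := by
    have hw2 : w0 = ∑ j ∈ cf.support, cf j • col A j := by
      rw [← hcfw, Finsupp.linearCombination_apply]; rfl
    rw [hw2]
    refine Finset.sum_subset (Finset.subset_univ _) ?_
    intro j _ hj
    rw [Finsupp.notMem_support_iff.mp hj, zero_smul]
  -- Step E
  have hcL : ∀ j ∈ L, c j = 0 := by
    intro j hj
    exact Submodule.starProjection_inner_eq_zero (toE b) (col A j) (col_mem A hj)
  have hEsum : ‖w0‖ ^ 2 = ∑ j ∈ S, x j * c j := by
    rw [← hinner0, hw0x, inner_sum]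
    have h1 : ∀ j : Fin l, (inner ℝ res (x j • col A j) : ℝ) = x j * c j := by
      intro j; rw [real_inner_smul_right, hc]
    rw [Finset.sum_congr rfl (fun j _ => h1 j)]
    rw [show (∑ j, x j * c j) = ∑ j ∈ L ∪ S, x j * c j by
      refine (Finset.sum_subset (Finset.subset_univ _) ?_).symm
      intro j _ hj; rw [hx0 j hj, zero_mul]]
    rw [Finset.sum_union hLS]
    rw [show (∑ j ∈ L, x j * c j) = 0 from Finset.sum_eq_zero fun j hj => by
      rw [hcL j hj, mul_zero]]
    ring
  -- Step F : quadratic form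
  have hnormw0 : ‖w0‖ ^ 2 = ∑ j₁, ∑ j₂, x j₁ * (A.transpose * A) j₁ j₂ * x j₂ := by
    rw [← real_inner_self_eq_norm_sq, hw0x, sum_inner]
    refine Finset.sum_congr rfl fun j₁ _ => ?_
    rw [real_inner_smul_left, inner_sum, Finset.mul_sum]
    refine Finset.sum_congr rfl fun j₂ _ => ?_
    rw [real_inner_smul_right, col_inner]
    ring
  -- Step G : apply hlam
  have hcard : (L ∪ S).card = L.card + S.card := Finset.card_union_of_disjoint hLS
  have hG : lam * ∑ j ∈ L ∪ S, x j ^ 2 ≤ ‖w0‖ ^ 2 / 2 := by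
    have := hlam (L ∪ S) hcard (fun j => x ↑j)
    rw [Finset.sum_coe_sort (L ∪ S) (fun j => x j ^ 2)] at this
    refine this.trans (le_of_eq ?_)
    have h1 : (∑ j₁ : (L ∪ S : Finset (Fin l)), ∑ j₂ : (L ∪ S : Finset (Fin l)),
        x ↑j₁ * ((A.transpose * A) (↑j₁) (↑j₂) / 2) * x ↑j₂)
        = ∑ j₁ ∈ L ∪ S, ∑ j₂ ∈ L ∪ S, x j₁ * ((A.transpose * A) j₁ j₂ / 2) * x j₂ := by
      rw [show (∑ j₁ : (L ∪ S : Finset (Fin l)), ∑ j₂ : (L ∪ S : Finset (Fin l)),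
          x ↑j₁ * ((A.transpose * A) (↑j₁) (↑j₂) / 2) * x ↑j₂)
          = ∑ j₁ : (L ∪ S : Finset (Fin l)), ∑ j₂ ∈ L ∪ S,
          x ↑j₁ * ((A.transpose * A) (↑j₁) j₂ / 2) * x j₂ from
        Finset.sum_congr rfl fun j₁ _ => Finset.sum_coe_sort (L ∪ S)
          (fun j₂ => x ↑j₁ * ((A.transpose * A) (↑j₁) j₂ / 2) * x j₂)]
      exact Finset.sum_coe_sort (L ∪ S)
        (fun j₁ => ∑ j₂ ∈ L ∪ S, x j₁ * ((A.transpose * A) j₁ j₂ / 2) * x j₂)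
    rw [h1]
    have h2 : ∀ j₁ : Fin l, (∑ j₂ ∈ L ∪ S, x j₁ * ((A.transpose * A) j₁ j₂ / 2) * x j₂)
        = ∑ j₂, x j₁ * ((A.transpose * A) j₁ j₂ / 2) * x j₂ := by
      intro j₁
      refine Finset.sum_subset (Finset.subset_univ _) ?_
      intro j₂ _ hj₂; rw [hx0 j₂ hj₂, mul_zero]
    rw [Finset.sum_congr rfl fun j₁ _ => h2 j₁]
    rw [show (∑ j₁ ∈ L ∪ S, ∑ j₂, x j₁ * ((A.transpose * A) j₁ j₂ / 2) * x j₂)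
        = ∑ j₁, ∑ j₂, x j₁ * ((A.transpose * A) j₁ j₂ / 2) * x j₂ from
      Finset.sum_subset (Finset.subset_univ _) fun j₁ _ hj₁ =>
        Finset.sum_eq_zero fun j₂ _ => by rw [hx0 j₁ hj₁, zero_mul, zero_mul]]
    rw [hnormw0, Finset.sum_div]
    refine Finset.sum_congr rfl fun j₁ _ => ?_
    rw [Finset.sum_div]
    refine Finset.sum_congr rfl fun j₂ _ => ?_
    ring
  -- Final assembly
  have hQ : (0:ℝ) ≤ ∑ j ∈ S, c j ^ 2 := Finset.sum_nonneg fun j _ => sq_nonneg _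
  have hB : ∑ j ∈ S, c j ^ 2 / 2 ≤ ∑ z ∈ S, (f L - f (insert z L)) :=
    Finset.sum_le_sum stepA
  have hw0nonneg : (0:ℝ) ≤ ‖w0‖ ^ 2 := sq_nonneg _
  have hxsq : (0:ℝ) ≤ ∑ j ∈ L ∪ S, x j ^ 2 := Finset.sum_nonneg fun j _ => sq_nonneg _
  have hcs : (‖w0‖ ^ 2) ^ 2 ≤ (∑ j ∈ L ∪ S, x j ^ 2) * ∑ j ∈ S, c j ^ 2 := by
    rw [hEsum]
    refine (Finset.sum_mul_sq_le_sq_mul_sq S x c).trans ?_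
    refine mul_le_mul_of_nonneg_right ?_ hQ
    exact Finset.sum_le_sum_of_subset_of_nonneg Finset.subset_union_right
      fun j _ _ => sq_nonneg _
  have key : lam * ‖w0‖ ^ 2 ≤ (∑ j ∈ S, c j ^ 2) / 2 := by
    rcases le_or_gt lam 0 with h | h
    · nlinarith
    · rcases eq_or_lt_of_le hw0nonneg with h0 | h0
      · rw [← h0]; nlinarith
      · nlinarith [mul_le_mul_of_nonneg_right hG hQ,
          mul_le_mul_of_nonneg_left hcs h.le, mul_pos h h0]
  rw [hE]
  calc lam * ‖w0‖ ^ 2 ≤ (∑ j ∈ S, c j ^ 2) / 2 := key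
    _ = ∑ j ∈ S, c j ^ 2 / 2 := Finset.sum_div ..
    _ ≤ _ := hB
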